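/- Let α > 0, λ ≠ 0, δ ∈ ℝ, ν = δ/2 − 1, z₀ > 0, θ = α/2, A = α⁴(δ−1)(δ−3)/128, B = λ²/8, and V(t,q) = A/q² + Bq². Then the function η*(t,q) = (4λ/(α² z₀^ν)) · e^{λt/2}/(e^{λt}−1) · I_ν(4λ z₀ e^{λt/2} q/(α²(e^{λt}−1))) · q^{1/2} · exp(λq²/α² − (2λ/α²)(z₀² + e^{λt}q²)/(e^{λt}−1)) satisfies the dual equation −θ² ∂η*/∂t = −(θ⁴/2) ∂²η*/∂q² + V η* on (0,∞) × (0,∞). -/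

import Mathlib

set_option maxHeartbeats 1600000


open Real

/-- The (real) modified Bessel function of the first kind. -/
noncomputable def besselI (ν : ℝ) (x : ℝ) : ℝ :=
  (x / 2) ^ ν * ∑' n : ℕ, (x ^ 2 / 4) ^ n / ((Nat.factorial n : ℝ) * Real.Gamma ((n : ℝ) + ν + 1))


def shiftD (d : ℕ → ℝ) (n : ℕ) : ℝ := ((n : ℝ) + 1) * d (n + 1)

def GoodSeq (d : ℕ → ℝ) : Prop := ∀ r : ℝ, 0 ≤ r → Summable (fun n => |d n| * r ^ n)

noncomputable def bcoef (ν : ℝ) (n : ℕ) : ℝ :=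
  1 / ((Nat.factorial n : ℝ) * Real.Gamma ((n : ℝ) + ν + 1))

lemma goodSeq_shift {d : ℕ → ℝ} (hd : GoodSeq d) : GoodSeq (shiftD d) := by
  intro r hr
  rcases eq_or_lt_of_le hr with h0 | h0
  · apply summable_of_ne_finset_zero (s := {0})
    intro n hn
    simp only [Finset.mem_singleton] at hn
    have : r ^ n = 0 := by
      rw [← h0]; exact zero_pow hn
    simp [this]
  · have hsum : Summable (fun n => |d (n + 1)| * (2 * r) ^ (n + 1) / r) := by
      have h1 : Summable (fun n => |d n| * (2 * r) ^ n) := hd (2 * r) (by linarith)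
      exact ((summable_nat_add_iff 1).2 h1).div_const r
    apply Summable.of_nonneg_of_le (fun n => by positivity) _ hsum
    intro n
    have hle : ((n : ℝ) + 1) ≤ 2 ^ (n + 1) := by
      have := Nat.lt_two_pow_self (n := n + 1)
      exact_mod_cast this.le.trans' (by exact_mod_cast Nat.le_refl _) |>.trans (le_refl _)
    have : |shiftD d n| = ((n : ℝ) + 1) * |d (n + 1)| := by
      rw [shiftD, abs_mul, abs_of_nonneg (by positivity)]
    rw [this]
    rw [mul_pow, div_eq_mul_inv]
    have hrn : r ^ (n+1) * r⁻¹ = r ^ n := by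
      rw [pow_succ, mul_assoc, mul_inv_cancel₀ h0.ne', mul_one]
    calc ((n:ℝ)+1) * |d (n+1)| * r ^ n ≤ 2 ^ (n+1) * |d (n+1)| * r ^ n := by
          apply mul_le_mul_of_nonneg_right (mul_le_mul_of_nonneg_right hle (abs_nonneg _)) (by positivity)
      _ = |d (n+1)| * (2 ^ (n+1) * r ^ (n+1)) * r⁻¹ := by rw [← hrn]; ring
      _ = _ := by ring

lemma goodSeq_summable {d : ℕ → ℝ} (hd : GoodSeq d) (x : ℝ) :
    Summable (fun n => d n * x ^ n) := by
  apply Summable.of_abs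
  have := hd |x| (abs_nonneg x)
  simpa [abs_mul, abs_pow] using this

lemma goodSeq_hasDerivAt {d : ℕ → ℝ} (hd : GoodSeq d) (x : ℝ) :
    HasDerivAt (fun y => ∑' n, d n * y ^ n) (∑' n, shiftD d n * x ^ n) x := by
  set R : ℝ := |x| + 1 with hR
  have hxR : |x| < R := by rw [hR]; linarith
  have hR0 : (0:ℝ) ≤ R := by positivity
  have hu : Summable (fun n : ℕ => (n : ℝ) * |d n| * R ^ (n - 1)) := by
    rw [← summable_nat_add_iff 1]
    apply ((goodSeq_shift hd) R hR0).congr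
    intro n
    rw [shiftD, abs_mul, abs_of_nonneg (a := (n:ℝ)+1) (by positivity)]
    push_cast
    ring
  have hbound : ∀ (n : ℕ) (y : ℝ), y ∈ Metric.ball (0:ℝ) R →
      ‖d n * ((n:ℝ) * y ^ (n-1))‖ ≤ (n : ℝ) * |d n| * R ^ (n - 1) := by
    intro n y hy
    have hyR : |y| ≤ R := by
      rw [Metric.mem_ball, dist_zero_right, Real.norm_eq_abs] at hy
      exact hy.le
    have h1 : ‖d n * ((n:ℝ) * y ^ (n-1))‖ = |d n| * ((n:ℝ) * |y| ^ (n-1)) := by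
      rw [Real.norm_eq_abs, abs_mul, abs_mul, abs_pow, Nat.abs_cast]
    rw [h1]
    calc |d n| * ((n:ℝ) * |y| ^ (n-1)) ≤ |d n| * ((n:ℝ) * R ^ (n-1)) := by
          apply mul_le_mul_of_nonneg_left
            (mul_le_mul_of_nonneg_left (pow_le_pow_left₀ (abs_nonneg _) hyR _) (by positivity))
            (abs_nonneg _)
      _ = (n:ℝ) * |d n| * R ^ (n-1) := by ring
  have key : HasDerivAt (fun y => ∑' n, d n * y ^ n)
      (∑' n, d n * ((n : ℝ) * x ^ (n - 1))) x :=
    hasDerivAt_tsum_of_isPreconnected hu (Metric.isOpen_ball)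
      ((convex_ball (0:ℝ) R).isPreconnected)
      (fun n y _ => (hasDerivAt_pow n y).const_mul (d n))
      hbound
      (by simp only [Metric.mem_ball, dist_zero_right, norm_zero]; linarith [abs_nonneg x])
      (goodSeq_summable hd 0)
      (by simpa only [Metric.mem_ball, dist_zero_right, Real.norm_eq_abs] using hxR)
  convert key using 1
  have hsum : Summable (fun n => d n * ((n:ℝ) * x ^ (n-1))) := by
    apply Summable.of_norm_bounded hu
    intro n
    exact hbound n x (by simpa only [Metric.mem_ball, dist_zero_right, Real.norm_eq_abs] using hxR)
  rw [Summable.tsum_eq_zero_add hsum]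
  simp only [Nat.cast_zero, zero_mul, mul_zero, zero_add]
  apply tsum_congr
  intro n
  rw [shiftD]
  push_cast
  ring

lemma summable_nmul {d : ℕ → ℝ} (hd : GoodSeq d) (x : ℝ) :
    Summable (fun n : ℕ => (n : ℝ) * d n * x ^ n) := by
  rw [← summable_nat_add_iff 1]
  apply ((goodSeq_summable (goodSeq_shift hd) x).mul_left x).congr
  intro n
  rw [shiftD]
  push_cast
  ring

lemma tsum_nmul {d : ℕ → ℝ} (hd : GoodSeq d) (x : ℝ) :
    ∑' n : ℕ, (n : ℝ) * d n * x ^ n = x * ∑' n, shiftD d n * x ^ n := by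
  rw [Summable.tsum_eq_zero_add (summable_nmul hd x)]
  simp only [Nat.cast_zero, zero_mul, zero_add]
  rw [← tsum_mul_left]
  apply tsum_congr
  intro n
  rw [shiftD]
  push_cast
  ring

lemma bcoef_rec (ν : ℝ) (n : ℕ) :
    ((n : ℝ) + 1) * ((n : ℝ) + ν + 1) * bcoef ν (n + 1) = bcoef ν n := by
  by_cases h : (n : ℝ) + ν + 1 = 0
  · have hΓ : Real.Gamma ((n : ℝ) + ν + 1) = 0 := by rw [h]; exact Real.Gamma_zero
    rw [h]
    simp [bcoef, hΓ]
  · have hΓ : Real.Gamma (((n : ℕ) + 1 : ℝ) + ν + 1) = ((n : ℝ) + ν + 1) * Real.Gamma ((n : ℝ) + ν + 1) := by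
      rw [show (((n : ℕ) + 1 : ℝ) : ℝ) + ν + 1 = ((n : ℝ) + ν + 1) + 1 by push_cast; ring]
      exact Real.Gamma_add_one h
    by_cases hΓ0 : Real.Gamma ((n : ℝ) + ν + 1) = 0
    · rw [bcoef, bcoef]
      push_cast
      rw [hΓ, hΓ0]
      simp
    · rw [bcoef, bcoef]
      push_cast
      rw [hΓ]
      rw [Nat.factorial_succ]
      push_cast
      field_simp

lemma goodSeq_bcoef (ν : ℝ) : GoodSeq (bcoef ν) := by
  set N : ℕ := ⌈-ν⌉₊ with hN
  have hNν : (0:ℝ) ≤ (N : ℝ) + ν := by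
    have := Nat.le_ceil (-ν)
    rw [← hN] at this
    linarith
  have hbd : ∀ k : ℕ, |bcoef ν (N + k)| ≤ |bcoef ν N| / (Nat.factorial k) := by
    intro k
    induction k with
    | zero => simp
    | succ k ih =>
      have hrec := bcoef_rec ν (N + k)
      have hc : ((N + k : ℕ) : ℝ) + 1 > 0 := by positivity
      have hc2 : ((N + k : ℕ) : ℝ) + ν + 1 ≥ 1 := by push_cast; linarith
      have habs : |bcoef ν (N + k)| =
          (((N + k : ℕ) : ℝ) + 1) * (((N + k : ℕ) : ℝ) + ν + 1) * |bcoef ν (N + k + 1)| := by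
        rw [← hrec, abs_mul, abs_mul, abs_of_pos hc, abs_of_pos (by linarith)]
      have hge : (((N + k : ℕ) : ℝ) + 1) * (((N + k : ℕ) : ℝ) + ν + 1) ≥ (k : ℝ) + 1 := by
        have h1 : ((N + k : ℕ) : ℝ) + 1 ≥ (k : ℝ) + 1 := by push_cast; linarith [Nat.cast_nonneg (α := ℝ) N]
        nlinarith
      have hkey : ((k:ℝ) + 1) * |bcoef ν (N + (k+1))| ≤ |bcoef ν N| / (Nat.factorial k) := by
        calc ((k:ℝ) + 1) * |bcoef ν (N + (k+1))|
            ≤ (((N + k : ℕ) : ℝ) + 1) * (((N + k : ℕ) : ℝ) + ν + 1) * |bcoef ν (N + k + 1)| := by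
              rw [show N + (k+1) = N + k + 1 by ring]
              exact mul_le_mul_of_nonneg_right hge (abs_nonneg _)
          _ = |bcoef ν (N + k)| := habs.symm
          _ ≤ _ := ih
      rw [Nat.factorial_succ]
      push_cast
      have hfac : (0:ℝ) < (Nat.factorial k : ℝ) := by exact_mod_cast Nat.factorial_pos k
      rw [le_div_iff₀ (by positivity)]
      calc |bcoef ν (N + (k+1))| * (((k:ℝ) + 1) * (Nat.factorial k : ℝ))
          = (((k:ℝ)+1) * |bcoef ν (N + (k+1))|) * (Nat.factorial k : ℝ) := by ring
        _ ≤ (|bcoef ν N| / (Nat.factorial k : ℝ)) * (Nat.factorial k : ℝ) :=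
            mul_le_mul_of_nonneg_right hkey hfac.le
        _ = |bcoef ν N| := by field_simp
  intro r hr
  rw [← summable_nat_add_iff N]
  have hsummaj : Summable (fun k : ℕ => (|bcoef ν N| * r ^ N) * (r ^ k / (Nat.factorial k))) :=
    (Real.summable_pow_div_factorial r).mul_left _
  apply Summable.of_nonneg_of_le (fun k => by positivity) _ hsummaj
  intro k
  calc |bcoef ν (k + N)| * r ^ (k + N)
      = |bcoef ν (N + k)| * (r ^ N * r ^ k) := by rw [Nat.add_comm k N, pow_add]
    _ ≤ (|bcoef ν N| / (Nat.factorial k)) * (r ^ N * r ^ k) := by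
        apply mul_le_mul_of_nonneg_right (hbd k) (by positivity)
    _ = (|bcoef ν N| * r ^ N) * (r ^ k / (Nat.factorial k)) := by ring

noncomputable def bg (ν u : ℝ) : ℝ := ∑' n, bcoef ν n * u ^ n
noncomputable def bg1 (ν u : ℝ) : ℝ := ∑' n, shiftD (bcoef ν) n * u ^ n
noncomputable def bg2 (ν u : ℝ) : ℝ := ∑' n, shiftD (shiftD (bcoef ν)) n * u ^ n

lemma besselI_eq_bg (ν x : ℝ) : besselI ν x = (x / 2) ^ ν * bg ν (x ^ 2 / 4) := by
  rw [besselI, bg]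
  congr 1
  apply tsum_congr
  intro n
  rw [bcoef]
  ring

lemma bg_hasDerivAt (ν u : ℝ) : HasDerivAt (bg ν ·) (bg1 ν u) u :=
  goodSeq_hasDerivAt (goodSeq_bcoef ν) u

lemma bg1_hasDerivAt (ν u : ℝ) : HasDerivAt (bg1 ν ·) (bg2 ν u) u :=
  goodSeq_hasDerivAt (goodSeq_shift (goodSeq_bcoef ν)) u

lemma bg_ode (ν u : ℝ) : u * bg2 ν u + (ν + 1) * bg1 ν u = bg ν u := by
  have h1 : u * bg2 ν u = ∑' n : ℕ, (n : ℝ) * shiftD (bcoef ν) n * u ^ n := by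
    rw [tsum_nmul (goodSeq_shift (goodSeq_bcoef ν)) u, bg2]
  have h2 : (ν + 1) * bg1 ν u = ∑' n : ℕ, (ν + 1) * (shiftD (bcoef ν) n * u ^ n) := by
    rw [bg1, ← tsum_mul_left]
  rw [h1, h2, ← Summable.tsum_add
    (summable_nmul (goodSeq_shift (goodSeq_bcoef ν)) u)
    ((goodSeq_summable (goodSeq_shift (goodSeq_bcoef ν)) u).mul_left (ν + 1))]
  rw [bg]
  apply tsum_congr
  intro n
  have h := bcoef_rec ν n
  rw [shiftD]
  linear_combination u ^ n * h

lemma profile_deriv1 (ν W Β C M x : ℝ) (hx : 0 < x) :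
    HasDerivAt (fun y => C * y ^ M * bg ν (W * y ^ 2) * Real.exp (Β * y ^ 2))
      (C * Real.exp (Β * x ^ 2) *
        (M * x ^ (M - 1) * bg ν (W * x ^ 2) + 2 * W * x ^ (M + 1) * bg1 ν (W * x ^ 2)
          + 2 * Β * x ^ (M + 1) * bg ν (W * x ^ 2))) x := by
  have hpow : HasDerivAt (fun y : ℝ => y ^ M) (M * x ^ (M - 1)) x :=
    Real.hasDerivAt_rpow_const (Or.inl hx.ne')
  have hinner : HasDerivAt (fun y : ℝ => W * y ^ 2) (W * (2 * x)) x := by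
    simpa using ((hasDerivAt_pow 2 x).const_mul W)
  have hg : HasDerivAt (fun y => bg ν (W * y ^ 2)) (bg1 ν (W * x ^ 2) * (W * (2 * x))) x :=
    (bg_hasDerivAt ν (W * x ^ 2)).comp (h₂ := fun u => bg ν u) x hinner
  have hexpin : HasDerivAt (fun y : ℝ => Β * y ^ 2) (Β * (2 * x)) x := by
    simpa using ((hasDerivAt_pow 2 x).const_mul Β)
  have hexp : HasDerivAt (fun y : ℝ => Real.exp (Β * y ^ 2))
      (Real.exp (Β * x ^ 2) * (Β * (2 * x))) x := hexpin.exp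
  have H := (((hpow.const_mul C).mul hg).mul hexp)
  refine H.congr_deriv ?_
  simp only [Pi.mul_apply]
  have e1 : x ^ (M + 1) = x ^ M * x := Real.rpow_add_one hx.ne' M
  have e2 : x ^ M = x ^ (M - 1) * x := by
    rw [← Real.rpow_add_one hx.ne' (M - 1)]; ring_nf
  rw [e1, e2]
  ring

lemma profile_deriv2 (ν W Β C M x : ℝ) (hx : 0 < x) :
    HasDerivAt (fun y => C * Real.exp (Β * y ^ 2) *
        (M * y ^ (M - 1) * bg ν (W * y ^ 2) + 2 * W * y ^ (M + 1) * bg1 ν (W * y ^ 2)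
          + 2 * Β * y ^ (M + 1) * bg ν (W * y ^ 2)))
      (C * Real.exp (Β * x ^ 2) *
        (2 * Β * x * (M * x ^ (M - 1) * bg ν (W * x ^ 2) + 2 * W * x ^ (M + 1) * bg1 ν (W * x ^ 2)
            + 2 * Β * x ^ (M + 1) * bg ν (W * x ^ 2))
          + (M * (M - 1) * x ^ (M - 2) * bg ν (W * x ^ 2)
            + 2 * W * M * x ^ M * bg1 ν (W * x ^ 2)
            + 2 * W * (M + 1) * x ^ M * bg1 ν (W * x ^ 2)
            + 4 * W ^ 2 * x ^ (M + 2) * bg2 ν (W * x ^ 2)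
            + 2 * Β * (M + 1) * x ^ M * bg ν (W * x ^ 2)
            + 4 * Β * W * x ^ (M + 2) * bg1 ν (W * x ^ 2)))) x := by
  have hinner : HasDerivAt (fun y : ℝ => W * y ^ 2) (W * (2 * x)) x := by
    simpa using ((hasDerivAt_pow 2 x).const_mul W)
  have hg : HasDerivAt (fun y => bg ν (W * y ^ 2)) (bg1 ν (W * x ^ 2) * (W * (2 * x))) x :=
    (bg_hasDerivAt ν (W * x ^ 2)).comp (h₂ := fun u => bg ν u) x hinner
  have hg1 : HasDerivAt (fun y => bg1 ν (W * y ^ 2)) (bg2 ν (W * x ^ 2) * (W * (2 * x))) x :=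
    (bg1_hasDerivAt ν (W * x ^ 2)).comp (h₂ := fun u => bg1 ν u) x hinner
  have hexpin : HasDerivAt (fun y : ℝ => Β * y ^ 2) (Β * (2 * x)) x := by
    simpa using ((hasDerivAt_pow 2 x).const_mul Β)
  have hexp : HasDerivAt (fun y : ℝ => Real.exp (Β * y ^ 2))
      (Real.exp (Β * x ^ 2) * (Β * (2 * x))) x := hexpin.exp
  have hp1 : HasDerivAt (fun y : ℝ => y ^ (M - 1)) ((M - 1) * x ^ (M - 1 - 1)) x :=
    Real.hasDerivAt_rpow_const (Or.inl hx.ne')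
  have hp2 : HasDerivAt (fun y : ℝ => y ^ (M + 1)) ((M + 1) * x ^ (M + 1 - 1)) x :=
    Real.hasDerivAt_rpow_const (Or.inl hx.ne')
  have h1 := ((hp1.const_mul M).mul hg)
  have h2 := ((hp2.const_mul (2 * W)).mul hg1)
  have h3 := ((hp2.const_mul (2 * Β)).mul hg)
  have H := (hexp.const_mul C).mul ((h1.add h2).add h3)
  refine H.congr_deriv ?_
  simp only [Pi.mul_apply, Pi.add_apply]
  have e0 : x ^ (M - 1 - 1) = x ^ (M - 2) := by rw [show M - 1 - 1 = M - 2 by ring]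
  have e1 : x ^ (M + 1 - 1) = x ^ M := by rw [show M + 1 - 1 = M by ring]
  have e2 : x ^ (M - 1) * x = x ^ M := by
    rw [← Real.rpow_add_one hx.ne' (M - 1)]; ring_nf
  have e3 : x ^ (M + 1) * x = x ^ (M + 2) := by
    rw [← Real.rpow_add_one hx.ne' (M + 1)]; ring_nf
  rw [e0, e1, ← e2, ← e3]
  ring

lemma profile_deriv_time (ν lam α z₀ q : ℝ) (hα : α ≠ 0) (t : ℝ)
    (hS : Real.exp (lam * t) - 1 ≠ 0)
    (hbpos : (2 * lam * Real.exp (lam * t / 2) / (α ^ 2 * (Real.exp (lam * t) - 1))) ≠ 0) :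
    HasDerivAt (fun τ => 2 * (2 * lam * Real.exp (lam * τ / 2) / (α ^ 2 * (Real.exp (lam * τ) - 1))) ^ (ν + 1) * q ^ (ν + 1/2) * bg ν (z₀ ^ 2 * (2 * lam * Real.exp (lam * τ / 2) / (α ^ 2 * (Real.exp (lam * τ) - 1))) ^ 2 * q ^ 2) * Real.exp ((lam / α ^ 2 - 2 * lam * Real.exp (lam * τ) / (α ^ 2 * (Real.exp (lam * τ) - 1))) * q ^ 2 + -(2 * lam * z₀ ^ 2) / (α ^ 2 * (Real.exp (lam * τ) - 1))))
      (2 * q ^ (ν + 1/2) * ((ν + 1) * (2 * lam * Real.exp (lam * t / 2) / (α ^ 2 * (Real.exp (lam * t) - 1))) ^ ν * (lam ^ 2 * Real.exp (lam * t / 2) * ((Real.exp (lam * t) - 1) - 2 * Real.exp (lam * t)) / (α ^ 2 * (Real.exp (lam * t) - 1) ^ 2)) * (bg ν (z₀ ^ 2 * (2 * lam * Real.exp (lam * t / 2) / (α ^ 2 * (Real.exp (lam * t) - 1))) ^ 2 * q ^ 2)) * Real.exp ((lam / α ^ 2 - 2 * lam * Real.exp (lam * t) / (α ^ 2 * (Real.exp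 (lam * t) - 1))) * q ^ 2 + -(2 * lam * z₀ ^ 2) / (α ^ 2 * (Real.exp (lam * t) - 1))) + (2 * lam * Real.exp (lam * t / 2) / (α ^ 2 * (Real.exp (lam * t) - 1))) ^ (ν + 1) * ((bg1 ν (z₀ ^ 2 * (2 * lam * Real.exp (lam * t / 2) / (α ^ 2 * (Real.exp (lam * t) - 1))) ^ 2 * q ^ 2)) * (z₀ ^ 2 * (2 * (2 * lam * Real.exp (lam * t / 2) / (α ^ 2 * (Real.exp (lam * t) - 1))) * (lam ^ 2 * Real.exp (lam * t / 2) * ((Real.exp (lam * t) - 1) - 2 * Real.exp (lam * t)) / (α ^ 2 * (Real.exp (lam * t) - 1) ^ 2))) * q ^ 2)) * Real.exp ((lam / α ^ 2 - 2 * lam * Real.exp (lam * t) / (α ^ 2 * (Real.exp (lam * t) - 1))) * q ^ 2 + -(2 * lam * z₀ ^ 2) / (α ^ 2 * (Real.exp (lam * t) - 1))) + (2 * lam * Real.exp (lam * t / 2) / (α ^ 2 * (Real.exp (lam * t) - 1))) ^ (ν + 1) * (bg ν (z₀ ^ 2 * (2 * lam * Real.exp (lam * t / 2) / (α ^ 2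 * (Real.exp (lam * t) - 1))) ^ 2 * q ^ 2)) * Real.exp ((lam / α ^ 2 - 2 * lam * Real.exp (lam * t) / (α ^ 2 * (Real.exp (lam * t) - 1))) * q ^ 2 + -(2 * lam * z₀ ^ 2) / (α ^ 2 * (Real.exp (lam * t) - 1))) * ((2 * lam ^ 2 * Real.exp (lam * t) / (α ^ 2 * (Real.exp (lam * t) - 1) ^ 2)) * q ^ 2 + (2 * lam ^ 2 * z₀ ^ 2 * Real.exp (lam * t) / (α ^ 2 * (Real.exp (lam * t) - 1) ^ 2))))) t := by
  have hden_ne : α ^ 2 * (Real.exp (lam * t) - 1) ≠ 0 := mul_ne_zero (pow_ne_zero 2 hα) hS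
  have hh : HasDerivAt (fun τ => Real.exp (lam * τ / 2)) (Real.exp (lam * t / 2) * (lam / 2)) t :=
by
    simpa using (((hasDerivAt_id t).const_mul lam).div_const 2).exp
  have hE : HasDerivAt (fun τ => Real.exp (lam * τ)) (Real.exp (lam * t) * lam) t :=
by
    simpa using ((hasDerivAt_id t).const_mul lam).exp
  have hnum := hh.const_mul (2 * lam)
  have hden := (hE.sub_const 1).const_mul (α ^ 2)
  have hbraw := hnum.div hden hden_ne
  have hb : HasDerivAt (fun τ => 2 * lam * Real.exp (lam * τ / 2) / (α ^ 2 * (Real.exp (lam * τ) - 1)))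
      (lam ^ 2 * Real.exp (lam * t / 2) * ((Real.exp (lam * t) - 1) - 2 * Real.exp (lam * t)) / (α ^ 2 * (Real.exp (lam * t) - 1) ^ 2)) t := by
    refine hbraw.congr_deriv ?_
    field_simp
  have hbp : HasDerivAt (fun τ => (2 * lam * Real.exp (lam * τ / 2) / (α ^ 2 * (Real.exp (lam * τ) - 1))) ^ (ν + 1))
      ((ν + 1) * (2 * lam * Real.exp (lam * t / 2) / (α ^ 2 * (Real.exp (lam * t) - 1))) ^ ν * (lam ^ 2 * Real.exp (lam * t / 2) * ((Real.exp (lam * t) - 1) - 2 * Real.exp (lam * t)) / (α ^ 2 * (Real.exp (lam * t) - 1) ^ 2))) t := by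
    have := hb.rpow_const (p := ν + 1) (Or.inl hbpos)
    convert this using 1
    rw [show ν + 1 - 1 = ν by ring]
    ring
  have hw : HasDerivAt (fun τ => z₀ ^ 2 * (2 * lam * Real.exp (lam * τ / 2) / (α ^ 2 * (Real.exp (lam * τ) - 1))) ^ 2 * q ^ 2)
      (z₀ ^ 2 * (2 * (2 * lam * Real.exp (lam * t / 2) / (α ^ 2 * (Real.exp (lam * t) - 1))) * (lam ^ 2 * Real.exp (lam * t / 2) * ((Real.exp (lam * t) - 1) - 2 * Real.exp (lam * t)) / (α ^ 2 * (Real.exp (lam * t) - 1) ^ 2))) * q ^ 2) t := by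
    have := ((hb.pow 2).const_mul (z₀ ^ 2)).mul_const (q ^ 2)
    refine this.congr_deriv ?_
    ring
  have hgc : HasDerivAt (fun τ => bg ν (z₀ ^ 2 * (2 * lam * Real.exp (lam * τ / 2) / (α ^ 2 * (Real.exp (lam * τ) - 1))) ^ 2 * q ^ 2))
      ((bg1 ν (z₀ ^ 2 * (2 * lam * Real.exp (lam * t / 2) / (α ^ 2 * (Real.exp (lam * t) - 1))) ^ 2 * q ^ 2)) * (z₀ ^ 2 * (2 * (2 * lam * Real.exp (lam * t / 2) / (α ^ 2 * (Real.exp (lam * t) - 1))) * (lam ^ 2 * Real.exp (lam * t / 2) * ((Real.exp (lam * t) - 1) - 2 * Real.exp (lam * t)) / (α ^ 2 * (Real.exp (lam * t) - 1) ^ 2))) * q ^ 2)) t :=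
    (bg_hasDerivAt ν (z₀ ^ 2 * (2 * lam * Real.exp (lam * t / 2) / (α ^ 2 * (Real.exp (lam * t) - 1))) ^ 2 * q ^ 2)).comp (h₂ := fun u => bg ν u) t hw
  have hβ : HasDerivAt (fun τ => lam / α ^ 2 - 2 * lam * Real.exp (lam * τ) / (α ^ 2 * (Real.exp (lam * τ) - 1)))
      (2 * lam ^ 2 * Real.exp (lam * t) / (α ^ 2 * (Real.exp (lam * t) - 1) ^ 2)) t := by
    have := ((hE.const_mul (2 * lam)).div hden hden_ne).const_sub (lam / α ^ 2)
    refine this.congr_deriv ?_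
    field_simp
    ring
  have hγ : HasDerivAt (fun τ => -(2 * lam * z₀ ^ 2) / (α ^ 2 * (Real.exp (lam * τ) - 1)))
      (2 * lam ^ 2 * z₀ ^ 2 * Real.exp (lam * t) / (α ^ 2 * (Real.exp (lam * t) - 1) ^ 2)) t := by
    have := (hasDerivAt_const t (-(2 * lam * z₀ ^ 2))).div hden hden_ne
    refine this.congr_deriv ?_
    field_simp
    ring
  have hX : HasDerivAt (fun τ => Real.exp ((lam / α ^ 2 - 2 * lam * Real.exp (lam * τ) / (α ^ 2 * (Real.exp (lam * τ) - 1))) * q ^ 2 + -(2 * lam * z₀ ^ 2) / (α ^ 2 * (Real.exp (lam * τ) - 1))))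
      (Real.exp ((lam / α ^ 2 - 2 * lam * Real.exp (lam * t) / (α ^ 2 * (Real.exp (lam * t) - 1))) * q ^ 2 + -(2 * lam * z₀ ^ 2) / (α ^ 2 * (Real.exp (lam * t) - 1))) * ((2 * lam ^ 2 * Real.exp (lam * t) / (α ^ 2 * (Real.exp (lam * t) - 1) ^ 2)) * q ^ 2 + (2 * lam ^ 2 * z₀ ^ 2 * Real.exp (lam * t) / (α ^ 2 * (Real.exp (lam * t) - 1) ^ 2)))) t :=
    ((hβ.mul_const (q ^ 2)).add hγ).exp
  have H := (((hbp.const_mul 2).mul_const (q ^ (ν + 1/2))).mul hgc).mul hX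
  refine H.congr_deriv ?_
  simp only [Pi.mul_apply]
  ring

/-- The function `η*` built from the Bessel-density quotient satisfies the dual heat
equation with potential `V(t,q) = A/q² + Bq²`. -/
theorem etaStar_bessel_solves_dual_heat (α lam δ ν z₀ θ A B : ℝ) (hα : 0 < α) (hlam : lam ≠ 0)
    (hν : ν = δ / 2 - 1) (hz₀ : 0 < z₀) (hθ : θ = α / 2)
    (hA : A = α ^ 4 * (δ - 1) * (δ - 3) / 128) (hB : B = lam ^ 2 / 8)
    (ηs : ℝ → ℝ → ℝ)
    (hηs : ∀ t q, ηs t q =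
      (4 * lam / (α ^ 2 * z₀ ^ ν)) * (Real.exp (lam * t / 2) / (Real.exp (lam * t) - 1)) *
        besselI ν (4 * lam * z₀ * Real.exp (lam * t / 2) * q / (α ^ 2 * (Real.exp (lam * t) - 1))) *
        q ^ ((1 : ℝ) / 2) *
        Real.exp (lam * q ^ 2 / α ^ 2 -
          (2 * lam / α ^ 2) * ((z₀ ^ 2 + Real.exp (lam * t) * q ^ 2) / (Real.exp (lam * t) - 1))))
    (t q : ℝ) (ht : 0 < t) (hq : 0 < q) :
    -(θ ^ 2) * deriv (fun τ => ηs τ q) t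
      = -(θ ^ 4 / 2) * deriv (deriv (ηs t)) q + (A / q ^ 2 + B * q ^ 2) * ηs t q := by
  have hα' : α ≠ 0 := hα.ne'
  have hq' : q ≠ 0 := hq.ne'
  have hz₀' : z₀ ≠ 0 := hz₀.ne'
  -- sign facts for a general positive time
  have hSne : ∀ τ : ℝ, 0 < τ → Real.exp (lam * τ) - 1 ≠ 0 := by
    intro τ hτ
    refine sub_ne_zero.2 fun hc => hlam ?_
    have := (Real.exp_eq_one_iff _).1 hc
    rcases mul_eq_zero.1 this with h | h
    · exact h
    · exact absurd h hτ.ne'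
  have hbpos : ∀ τ : ℝ, 0 < τ → 0 < 2 * lam * Real.exp (lam * τ / 2) / (α ^ 2 * (Real.exp (lam * τ) - 1)) := by
    intro τ hτ
    rcases hlam.lt_or_gt with hl | hl
    · have hlt : lam * τ < 0 := mul_neg_of_neg_of_pos hl hτ
      have hE1 : Real.exp (lam * τ) < 1 := by
        rw [← Real.exp_zero]
        exact Real.exp_lt_exp.2 hlt
      apply div_pos_of_neg_of_neg
      · have : 0 < Real.exp (lam * τ / 2) := Real.exp_pos _
        nlinarith
      · nlinarith [sq_nonneg α, pow_pos hα 2]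
    · have hlt : 0 < lam * τ := mul_pos hl hτ
      have hE1 : 1 < Real.exp (lam * τ) := by
        rw [← Real.exp_zero]
        exact Real.exp_lt_exp.2 hlt
      apply div_pos
      · positivity
      · nlinarith [pow_pos hα 2]
  -- the product form of ηs
  have Form : ∀ τ : ℝ, 0 < τ → ∀ x : ℝ, 0 < x → ηs τ x = 2 * (2 * lam * Real.exp (lam * τ / 2) / (α ^ 2 * (Real.exp (lam * τ) - 1))) ^ (ν + 1) * x ^ (ν + 1/2) * bg ν (z₀ ^ 2 * (2 * lam * Real.exp (lam * τ / 2) / (α ^ 2 * (Real.exp (lam * τ) - 1))) ^ 2 * x ^ 2) * Real.exp ((lam / α ^ 2 - 2 * lam * Real.exp (lam * τ) / (α ^ 2 * (Real.exp (lam * τ) - 1))) * x ^ 2 + (-(2 * lam * z₀ ^ 2) / (α ^ 2 * (Real.exp (lam * τ) - 1)))) := by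
    intro τ hτ x hx
    have hS := hSne τ hτ
    have hb := hbpos τ hτ
    have hh : (0:ℝ) < Real.exp (lam * τ / 2) := Real.exp_pos _
    rw [hηs τ x, besselI_eq_bg]
    have h1 : 4 * lam * z₀ * Real.exp (lam * τ / 2) * x / (α ^ 2 * (Real.exp (lam * τ) - 1)) / 2
        = z₀ * (2 * lam * Real.exp (lam * τ / 2) / (α ^ 2 * (Real.exp (lam * τ) - 1))) * x := by
      field_simp
      ring
    have h2 : (4 * lam * z₀ * Real.exp (lam * τ / 2) * x / (α ^ 2 * (Real.exp (lam * τ) - 1))) ^ 2 / 4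
        = z₀ ^ 2 * (2 * lam * Real.exp (lam * τ / 2) / (α ^ 2 * (Real.exp (lam * τ) - 1))) ^ 2 * x ^ 2 := by
      field_simp
      ring
    rw [h1, h2]
    have h3 : (z₀ * (2 * lam * Real.exp (lam * τ / 2) / (α ^ 2 * (Real.exp (lam * τ) - 1))) * x) ^ ν = z₀ ^ ν * (2 * lam * Real.exp (lam * τ / 2) / (α ^ 2 * (Real.exp (lam * τ) - 1))) ^ ν * x ^ ν := by
      rw [Real.mul_rpow (mul_nonneg hz₀.le hb.le) hx.le, Real.mul_rpow hz₀.le hb.le]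
    have harg : lam * x ^ 2 / α ^ 2 -
        (2 * lam / α ^ 2) * ((z₀ ^ 2 + Real.exp (lam * τ) * x ^ 2) / (Real.exp (lam * τ) - 1))
        = (lam / α ^ 2 - 2 * lam * Real.exp (lam * τ) / (α ^ 2 * (Real.exp (lam * τ) - 1))) * x ^ 2 + (-(2 * lam * z₀ ^ 2) / (α ^ 2 * (Real.exp (lam * τ) - 1))) := by
      field_simp
      ring
    have h4 : x ^ (ν + 1/2) = x ^ ν * x ^ ((1:ℝ)/2) := by
      rw [← Real.rpow_add hx]
    have h5 : (2 * lam * Real.exp (lam * τ / 2) / (α ^ 2 * (Real.exp (lam * τ) - 1))) ^ (ν + 1) = (2 * lam * Real.exp (lam * τ / 2) / (α ^ 2 * (Real.exp (lam * τ) - 1))) ^ ν * (2 * lam * Real.exp (lam * τ / 2) / (α ^ 2 * (Real.exp (lam * τ) - 1))) := Real.rpow_add_one hb.ne' ν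
    rw [h3, harg, h4, h5]
    have hz₀ν : z₀ ^ ν ≠ 0 := (Real.rpow_pos_of_pos hz₀ ν).ne'
    field_simp
    ring
  -- space form at time t
  have hspace : ∀ y : ℝ, 0 < y → ηs t y =
      (2 * (2 * lam * Real.exp (lam * t / 2) / (α ^ 2 * (Real.exp (lam * t) - 1))) ^ (ν + 1) * Real.exp (-(2 * lam * z₀ ^ 2) / (α ^ 2 * (Real.exp (lam * t) - 1)))) * y ^ (ν + 1/2) * bg ν ((z₀ ^ 2 * (2 * lam * Real.exp (lam * t / 2) / (α ^ 2 * (Real.exp (lam * t) - 1))) ^ 2) * y ^ 2) * Real.exp ((lam / α ^ 2 - 2 * lam * Real.exp (lam * t) / (α ^ 2 * (Real.exp (lam * t) - 1))) * y ^ 2) := by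
    intro y hy
    rw [Form t ht y hy, Real.exp_add]
    ring
  -- first space derivative
  have hF1 : ∀ x : ℝ, 0 < x → HasDerivAt (ηs t)
      ((2 * (2 * lam * Real.exp (lam * t / 2) / (α ^ 2 * (Real.exp (lam * t) - 1))) ^ (ν + 1) * Real.exp (-(2 * lam * z₀ ^ 2) / (α ^ 2 * (Real.exp (lam * t) - 1)))) * Real.exp ((lam / α ^ 2 - 2 * lam * Real.exp (lam * t) / (α ^ 2 * (Real.exp (lam * t) - 1))) * x ^ 2) *
        ((ν + 1/2) * x ^ (ν + 1/2 - 1) * bg ν ((z₀ ^ 2 * (2 * lam * Real.exp (lam * t / 2) / (α ^ 2 * (Real.exp (lam * t) - 1))) ^ 2) * x ^ 2)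
          + 2 * (z₀ ^ 2 * (2 * lam * Real.exp (lam * t / 2) / (α ^ 2 * (Real.exp (lam * t) - 1))) ^ 2) * x ^ (ν + 1/2 + 1) * bg1 ν ((z₀ ^ 2 * (2 * lam * Real.exp (lam * t / 2) / (α ^ 2 * (Real.exp (lam * t) - 1))) ^ 2) * x ^ 2)
          + 2 * (lam / α ^ 2 - 2 * lam * Real.exp (lam * t) / (α ^ 2 * (Real.exp (lam * t) - 1))) * x ^ (ν + 1/2 + 1) * bg ν ((z₀ ^ 2 * (2 * lam * Real.exp (lam * t / 2) / (α ^ 2 * (Real.exp (lam * t) - 1))) ^ 2) * x ^ 2))) x := by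
    intro x hx
    apply HasDerivAt.congr_of_eventuallyEq (profile_deriv1 ν (z₀ ^ 2 * (2 * lam * Real.exp (lam * t / 2) / (α ^ 2 * (Real.exp (lam * t) - 1))) ^ 2) (lam / α ^ 2 - 2 * lam * Real.exp (lam * t) / (α ^ 2 * (Real.exp (lam * t) - 1))) (2 * (2 * lam * Real.exp (lam * t / 2) / (α ^ 2 * (Real.exp (lam * t) - 1))) ^ (ν + 1) * Real.exp (-(2 * lam * z₀ ^ 2) / (α ^ 2 * (Real.exp (lam * t) - 1)))) (ν + 1/2) x hx)
    filter_upwards [Ioi_mem_nhds hx] with y hy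
    exact hspace y hy
  -- second space derivative
  have hF2 : HasDerivAt (deriv (ηs t))
      ((2 * (2 * lam * Real.exp (lam * t / 2) / (α ^ 2 * (Real.exp (lam * t) - 1))) ^ (ν + 1) * Real.exp (-(2 * lam * z₀ ^ 2) / (α ^ 2 * (Real.exp (lam * t) - 1)))) * Real.exp ((lam / α ^ 2 - 2 * lam * Real.exp (lam * t) / (α ^ 2 * (Real.exp (lam * t) - 1))) * q ^ 2) *
        (2 * (lam / α ^ 2 - 2 * lam * Real.exp (lam * t) / (α ^ 2 * (Real.exp (lam * t) - 1))) * q * ((ν + 1/2) * q ^ (ν + 1/2 - 1) * bg ν ((z₀ ^ 2 * (2 * lam * Real.exp (lam * t / 2) / (α ^ 2 * (Real.exp (lam * t) - 1))) ^ 2) * q ^ 2)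
            + 2 * (z₀ ^ 2 * (2 * lam * Real.exp (lam * t / 2) / (α ^ 2 * (Real.exp (lam * t) - 1))) ^ 2) * q ^ (ν + 1/2 + 1) * bg1 ν ((z₀ ^ 2 * (2 * lam * Real.exp (lam * t / 2) / (α ^ 2 * (Real.exp (lam * t) - 1))) ^ 2) * q ^ 2)
            + 2 * (lam / α ^ 2 - 2 * lam * Real.exp (lam * t) / (α ^ 2 * (Real.exp (lam * t) - 1))) * q ^ (ν + 1/2 + 1) * bg ν ((z₀ ^ 2 * (2 * lam * Real.exp (lam * t / 2) / (α ^ 2 * (Real.exp (lam * t) - 1))) ^ 2) * q ^ 2))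
          + ((ν + 1/2) * (ν + 1/2 - 1) * q ^ (ν + 1/2 - 2) * bg ν ((z₀ ^ 2 * (2 * lam * Real.exp (lam * t / 2) / (α ^ 2 * (Real.exp (lam * t) - 1))) ^ 2) * q ^ 2)
            + 2 * (z₀ ^ 2 * (2 * lam * Real.exp (lam * t / 2) / (α ^ 2 * (Real.exp (lam * t) - 1))) ^ 2) * (ν + 1/2) * q ^ (ν + 1/2) * bg1 ν ((z₀ ^ 2 * (2 * lam * Real.exp (lam * t / 2) / (α ^ 2 * (Real.exp (lam * t) - 1))) ^ 2) * q ^ 2)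
            + 2 * (z₀ ^ 2 * (2 * lam * Real.exp (lam * t / 2) / (α ^ 2 * (Real.exp (lam * t) - 1))) ^ 2) * (ν + 1/2 + 1) * q ^ (ν + 1/2) * bg1 ν ((z₀ ^ 2 * (2 * lam * Real.exp (lam * t / 2) / (α ^ 2 * (Real.exp (lam * t) - 1))) ^ 2) * q ^ 2)
            + 4 * (z₀ ^ 2 * (2 * lam * Real.exp (lam * t / 2) / (α ^ 2 * (Real.exp (lam * t) - 1))) ^ 2) ^ 2 * q ^ (ν + 1/2 + 2) * bg2 ν ((z₀ ^ 2 * (2 * lam * Real.exp (lam * t / 2) / (α ^ 2 * (Real.exp (lam * t) - 1))) ^ 2) * q ^ 2)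
            + 2 * (lam / α ^ 2 - 2 * lam * Real.exp (lam * t) / (α ^ 2 * (Real.exp (lam * t) - 1))) * (ν + 1/2 + 1) * q ^ (ν + 1/2) * bg ν ((z₀ ^ 2 * (2 * lam * Real.exp (lam * t / 2) / (α ^ 2 * (Real.exp (lam * t) - 1))) ^ 2) * q ^ 2)
            + 4 * (lam / α ^ 2 - 2 * lam * Real.exp (lam * t) / (α ^ 2 * (Real.exp (lam * t) - 1))) * (z₀ ^ 2 * (2 * lam * Real.exp (lam * t / 2) / (α ^ 2 * (Real.exp (lam * t) - 1))) ^ 2) * q ^ (ν + 1/2 + 2) * bg1 ν ((z₀ ^ 2 * (2 * lam * Real.exp (lam * t / 2) / (α ^ 2 * (Real.exp (lam * t) - 1))) ^ 2) * q ^ 2)))) q := by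
    apply HasDerivAt.congr_of_eventuallyEq (profile_deriv2 ν (z₀ ^ 2 * (2 * lam * Real.exp (lam * t / 2) / (α ^ 2 * (Real.exp (lam * t) - 1))) ^ 2) (lam / α ^ 2 - 2 * lam * Real.exp (lam * t) / (α ^ 2 * (Real.exp (lam * t) - 1))) (2 * (2 * lam * Real.exp (lam * t / 2) / (α ^ 2 * (Real.exp (lam * t) - 1))) ^ (ν + 1) * Real.exp (-(2 * lam * z₀ ^ 2) / (α ^ 2 * (Real.exp (lam * t) - 1)))) (ν + 1/2) q hq)
    filter_upwards [Ioi_mem_nhds hq] with y hy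
    exact (hF1 y hy).deriv
  -- time derivative
  have hFt : HasDerivAt (fun τ => ηs τ q)
      (2 * q ^ (ν + 1/2) * ((ν + 1) * (2 * lam * Real.exp (lam * t / 2) / (α ^ 2 * (Real.exp (lam * t) - 1))) ^ ν * (lam ^ 2 * Real.exp (lam * t / 2) * ((Real.exp (lam * t) - 1) - 2 * Real.exp (lam * t)) / (α ^ 2 * (Real.exp (lam * t) - 1) ^ 2)) * (bg ν (z₀ ^ 2 * (2 * lam * Real.exp (lam * t / 2) / (α ^ 2 * (Real.exp (lam * t) - 1))) ^ 2 * q ^ 2)) * Real.exp ((lam / α ^ 2 - 2 * lam * Real.exp (lam * t) / (α ^ 2 * (Real.exp (lam * t) - 1))) * q ^ 2 + (-(2 * lam * z₀ ^ 2) / (α ^ 2 * (Real.exp (lam * t) - 1))))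
        + (2 * lam * Real.exp (lam * t / 2) / (α ^ 2 * (Real.exp (lam * t) - 1))) ^ (ν + 1) * ((bg1 ν (z₀ ^ 2 * (2 * lam * Real.exp (lam * t / 2) / (α ^ 2 * (Real.exp (lam * t) - 1))) ^ 2 * q ^ 2)) * (z₀ ^ 2 * (2 * (2 * lam * Real.exp (lam * t / 2) / (α ^ 2 * (Real.exp (lam * t) - 1))) * (lam ^ 2 * Real.exp (lam * t / 2) * ((Real.exp (lam * t) - 1) - 2 * Real.exp (lam * t)) / (α ^ 2 * (Real.exp (lam * t) - 1) ^ 2))) * q ^ 2)) * Real.exp ((lam / α ^ 2 - 2 * lam * Real.exp (lam * t) / (α ^ 2 * (Real.exp (lam * t) - 1))) * q ^ 2 + (-(2 * lam * z₀ ^ 2) / (α ^ 2 * (Real.exp (lam * t) - 1))))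
        + (2 * lam * Real.exp (lam * t / 2) / (α ^ 2 * (Real.exp (lam * t) - 1))) ^ (ν + 1) * (bg ν (z₀ ^ 2 * (2 * lam * Real.exp (lam * t / 2) / (α ^ 2 * (Real.exp (lam * t) - 1))) ^ 2 * q ^ 2)) * Real.exp ((lam / α ^ 2 - 2 * lam * Real.exp (lam * t) / (α ^ 2 * (Real.exp (lam * t) - 1))) * q ^ 2 + (-(2 * lam * z₀ ^ 2) / (α ^ 2 * (Real.exp (lam * t) - 1)))) * ((2 * lam ^ 2 * Real.exp (lam * t) / (α ^ 2 * (Real.exp (lam * t) - 1) ^ 2)) * q ^ 2 + (2 * lam ^ 2 * z₀ ^ 2 * Real.exp (lam * t) / (α ^ 2 * (Real.exp (lam * t) - 1) ^ 2))))) t := by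
    apply HasDerivAt.congr_of_eventuallyEq
      (profile_deriv_time ν lam α z₀ q hα' t (hSne t ht) (hbpos t ht).ne')
    filter_upwards [Ioi_mem_nhds ht] with τ hτ
    exact Form τ hτ q hq
  rw [hFt.deriv, hF2.deriv, Form t ht q hq]
  have hδ : δ = 2 * ν + 2 := by rw [hν]; ring
  rw [hθ, hB, hA, hδ]
  -- abbreviate exponentials
  set h2 := Real.exp (lam * t / 2) with hh2def
  set Eh := Real.exp (lam * t) with hEhdef
  have hE2 : Eh = h2 ^ 2 := by
    rw [hEhdef, hh2def, sq, ← Real.exp_add]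
    congr 1
    ring
  rw [hE2]
  set b := 2 * lam * h2 / (α ^ 2 * (h2 ^ 2 - 1)) with hbdef
  have hbp0 : 0 < b := by
    have hx := hbpos t ht
    rw [show Real.exp (lam * t) = Real.exp (lam * t / 2) ^ 2 by
      rw [sq, ← Real.exp_add]; congr 1; ring] at hx
    exact hx
  have ode := bg_ode ν (z₀ ^ 2 * b ^ 2 * q ^ 2)
  have hune : z₀ ^ 2 * b ^ 2 * q ^ 2 ≠ 0 := by positivity
  have hg2v : bg2 ν (z₀ ^ 2 * b ^ 2 * q ^ 2)
      = (bg ν (z₀ ^ 2 * b ^ 2 * q ^ 2) - (ν + 1) * bg1 ν (z₀ ^ 2 * b ^ 2 * q ^ 2))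
        / (z₀ ^ 2 * b ^ 2 * q ^ 2) := by
    rw [eq_div_iff hune]
    linarith [ode]
  rw [hg2v]
  set g0 := bg ν (z₀ ^ 2 * b ^ 2 * q ^ 2) with hg0def
  set g1 := bg1 ν (z₀ ^ 2 * b ^ 2 * q ^ 2) with hg1def
  have hqm1 : q ^ (ν + 1/2 - 1) = q ^ (ν + 1/2) / q := by
    rw [Real.rpow_sub hq, Real.rpow_one]
  have hqm2 : q ^ (ν + 1/2 - 2) = q ^ (ν + 1/2) / q ^ 2 := by
    rw [Real.rpow_sub hq, show (2:ℝ) = ((2:ℕ):ℝ) by norm_num, Real.rpow_natCast]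
  have hqp1 : q ^ (ν + 1/2 + 1) = q ^ (ν + 1/2) * q := Real.rpow_add_one hq' _
  have hqp2 : q ^ (ν + 1/2 + 2) = q ^ (ν + 1/2) * q ^ 2 := by
    rw [show ν + 1/2 + 2 = ν + 1/2 + 1 + 1 by ring, Real.rpow_add_one hq', Real.rpow_add_one hq']
    ring
  rw [hqm1, hqm2, hqp1, hqp2]
  set QM := q ^ (ν + 1/2) with hQMdef
  have hQM0 : QM ≠ 0 := by
    rw [hQMdef]
    exact (Real.rpow_pos_of_pos hq _).ne'
  set BP := b ^ (ν + 1) with hBPdef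
  have hbν : b ^ ν = BP / b := by
    rw [hBPdef, Real.rpow_add_one hbp0.ne']
    field_simp
  rw [hbν]
  simp only [Real.exp_add]
  set X1 := Real.exp ((lam / α ^ 2 - 2 * lam * h2 ^ 2 / (α ^ 2 * (h2 ^ 2 - 1))) * q ^ 2) with hX1def
  set X2 := Real.exp (-(2 * lam * z₀ ^ 2) / (α ^ 2 * (h2 ^ 2 - 1))) with hX2def
  have hS2 : h2 ^ 2 - 1 ≠ 0 := by
    have hx := hSne t ht
    rw [show Real.exp (lam * t) = Real.exp (lam * t / 2) ^ 2 by
      rw [sq, ← Real.exp_add]; congr 1; ring] at hx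
    exact hx
  field_simp
  rw [hbdef]
  field_simp
  ring
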